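/- Let H and G be real Hilbert spaces, let β > 0, let h : H → ℝ be convex and differentiable with β^{-1}-Lipschitz continuous gradient, let g ∈ Γ_0(G), let L : H → G be bounded linear, let V be a closed vector subspace of H with orthogonal projection P_V, and define K(x,v) = h(x) + ι_V(x) + ⟨Lx,v⟩ − g*(v). Let γ ∈ ]0, β], let x_n ∈ V, let v₊ ∈ dom g*, and set x₊ = P_V(x_n − γ(L* v₊ + ∇h(x_n))). Then for every x ∈ V, γ (K(x₊, v₊) − K(x, v₊)) ≤ (1/2)(‖x_n − x‖² − ‖x₊ − x‖²) − (γ/2)(1/γ − 1/β)‖x₊ − x_n‖². -/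

import Mathlib

open scoped RealInnerProductSpace

/-- The orthogonal projection of `H` onto the closed subspace `V`, as a map `H →L[ℝ] H`. -/
noncomputable def projV {H : Type*} [NormedAddCommGroup H] [InnerProductSpace ℝ H]
    (V : Submodule ℝ H) [V.HasOrthogonalProjection] : H →L[ℝ] H :=
  V.subtypeL.comp V.orthogonalProjectionOnto

/-- Fenchel conjugate of an `EReal`-valued function on a real inner product space. -/
noncomputable def fconj {G : Type*} [NormedAddCommGroup G] [InnerProductSpace ℝ G]
    (g : G → EReal) (v : G) : EReal :=
  ⨆ y : G, ((⟪v, y⟫ : ℝ) : EReal) - g y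

open Classical in
/-- The saddle function `K(x,v) = h(x) + ι_V(x) + ⟨Lx, v⟩ − g*(v)` (with values in `EReal`). -/
noncomputable def saddleK {H G : Type*} [NormedAddCommGroup H] [InnerProductSpace ℝ H]
    [NormedAddCommGroup G] [InnerProductSpace ℝ G]
    (h : H → ℝ) (g : G → EReal) (L : H →L[ℝ] G) (V : Submodule ℝ H)
    (x : H) (v : G) : EReal :=
  ((h x : ℝ) : EReal) + (if x ∈ V then (0 : EReal) else ⊤)
    + ((⟪L x, v⟫ : ℝ) : EReal) - fconj g v

section Aux

variable {H : Type*} [NormedAddCommGroup H] [InnerProductSpace ℝ H] [CompleteSpace H]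

/-- Derivative of `h` along a line, from the gradient. -/
lemma hasDerivAt_line {h : H → ℝ} {h' : H → H} (hgrad : ∀ z : H, HasGradientAt h (h' z) z)
    (x d : H) (t : ℝ) :
    HasDerivAt (fun s : ℝ => h (x + s • d)) ⟪h' (x + t • d), d⟫ t := by
  have hline : HasDerivAt (fun s : ℝ => x + s • d) d t := by
    simpa using ((hasDerivAt_id t).smul_const d).const_add x
  have := (hgrad (x + t • d)).hasFDerivAt.comp_hasDerivAt t hline
  simpa [InnerProductSpace.toDual_apply_apply, Function.comp_def] using this

/-- Gradient inequality for convex functions. -/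
lemma convex_grad_ineq {h : H → ℝ} (hconv : ConvexOn ℝ Set.univ h)
    {h' : H → H} (hgrad : ∀ z : H, HasGradientAt h (h' z) z) (x y : H) :
    h x + ⟪h' x, y - x⟫ ≤ h y := by
  set d := y - x with hd
  set φ : ℝ → ℝ := fun s => h (x + s • d) with hφ
  have hφc : ConvexOn ℝ Set.univ φ := by
    refine ⟨convex_univ, ?_⟩
    intro s _ t _ a b ha hb hab
    have key : x + (a * s + b * t) • d = a • (x + s • d) + b • (x + t • d) := by
      have h1 : a • (x + s • d) + b • (x + t • d) = (a + b) • x + (a * s + b * t) • d := by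
        module
      rw [h1, hab, one_smul]
    simp only [hφ, smul_eq_mul, key]
    exact hconv.2 trivial trivial ha hb hab
  have hder : HasDerivAt φ ⟪h' x, d⟫ 0 := by
    have := hasDerivAt_line hgrad x d 0
    simpa using this
  have hs := hφc.le_slope_of_hasDerivAt (Set.mem_univ (0:ℝ)) (Set.mem_univ (1:ℝ))
    one_pos hder
  rw [slope_def_field] at hs
  have h0 : φ 0 = h x := by simp [hφ]
  have h1 : φ 1 = h y := by simp [hφ, hd]
  rw [h0, h1] at hs
  have : ⟪h' x, d⟫ ≤ h y - h x := by linarith [hs]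
  linarith

/-- Descent lemma for functions with Lipschitz gradient. -/
lemma descent_lemma {β : ℝ} (hβ : 0 < β) {h : H → ℝ} {h' : H → H}
    (hgrad : ∀ z : H, HasGradientAt h (h' z) z)
    (hlip : ∀ z w : H, ‖h' z - h' w‖ ≤ β⁻¹ * ‖z - w‖) (x y : H) :
    h y ≤ h x + ⟪h' x, y - x⟫ + β⁻¹ / 2 * ‖y - x‖ ^ 2 := by
  set d := y - x with hd
  set ψ : ℝ → ℝ := fun t => h (x + t • d) - t * ⟪h' x, d⟫ - β⁻¹ * ‖d‖ ^ 2 / 2 * (t * t)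
    with hψ
  have hder : ∀ t : ℝ, HasDerivAt ψ
      (⟪h' (x + t • d), d⟫ - ⟪h' x, d⟫ - β⁻¹ * ‖d‖ ^ 2 * t) t := by
    intro t
    have h1 := hasDerivAt_line hgrad x d t
    have h2 : HasDerivAt (fun t : ℝ => t * ⟪h' x, d⟫) ⟪h' x, d⟫ t := by
      simpa using (hasDerivAt_id t).mul_const ⟪h' x, d⟫
    have h3 : HasDerivAt (fun t : ℝ => β⁻¹ * ‖d‖ ^ 2 / 2 * (t * t))
        (β⁻¹ * ‖d‖ ^ 2 * t) t := by
      have h4 := ((hasDerivAt_id t).mul (hasDerivAt_id t)).const_mul (β⁻¹ * ‖d‖ ^ 2 / 2)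
      simp only [id_eq, one_mul, mul_one] at h4
      exact h4.congr_deriv (by ring)
    exact (h1.sub h2).sub h3
  have hanti : AntitoneOn ψ (Set.Icc (0:ℝ) 1) := by
    apply antitoneOn_of_deriv_nonpos (convex_Icc 0 1)
    · exact fun t _ => ((hder t).continuousAt).continuousWithinAt
    · intro t ht
      exact ((hder t).differentiableAt).differentiableWithinAt
    · intro t ht
      rw [interior_Icc] at ht
      rw [(hder t).deriv]
      have hdiff : ⟪h' (x + t • d) - h' x, d⟫ ≤ β⁻¹ * ‖d‖ ^ 2 * t := by
        calc ⟪h' (x + t • d) - h' x, d⟫ ≤ ‖h' (x + t • d) - h' x‖ * ‖d‖ :=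
              real_inner_le_norm _ _
          _ ≤ (β⁻¹ * ‖x + t • d - x‖) * ‖d‖ := by
              have := hlip (x + t • d) x
              exact mul_le_mul_of_nonneg_right this (norm_nonneg d)
          _ = β⁻¹ * ‖d‖ ^ 2 * t := by
              rw [add_sub_cancel_left, norm_smul, Real.norm_eq_abs,
                abs_of_pos ht.1]
              ring
      rw [inner_sub_left] at hdiff
      linarith
  have hkey := hanti (Set.left_mem_Icc.2 zero_le_one) (Set.right_mem_Icc.2 zero_le_one)
    zero_le_one
  have h0 : ψ 0 = h x := by simp [hψ]
  have h1 : ψ 1 = h y - ⟪h' x, d⟫ - β⁻¹ * ‖d‖ ^ 2 / 2 := by simp [hψ, hd]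
  rw [h0, h1] at hkey
  rw [hd] at *
  linarith

end Aux

/-- Primal descent inequality for the saddle function: for `γ ∈ ]0,β]`,
`xₙ ∈ V`, `v₊ ∈ dom g*` and `x₊ = P_V(xₙ − γ(L* v₊ + ∇h(xₙ)))`, every `x ∈ V` satisfies
`γ(K(x₊,v₊) − K(x,v₊)) ≤ ½(‖xₙ−x‖² − ‖x₊−x‖²) − (γ/2)(1/γ − 1/β)‖x₊−xₙ‖²`. -/
theorem saddle_primal_descent
    {H G : Type*} [NormedAddCommGroup H] [InnerProductSpace ℝ H] [CompleteSpace H]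
    [NormedAddCommGroup G] [InnerProductSpace ℝ G] [CompleteSpace G]
    (β : ℝ) (hβ : 0 < β)
    (h : H → ℝ) (hconv : ConvexOn ℝ Set.univ h)
    (h' : H → H) (hgrad : ∀ z : H, HasGradientAt h (h' z) z)
    (hlip : ∀ z w : H, ‖h' z - h' w‖ ≤ β⁻¹ * ‖z - w‖)
    (g : G → EReal)
    (hg_ne_bot : ∀ y : G, g y ≠ ⊥) (hg_proper : ∃ y : G, g y ≠ ⊤)
    (hg_convex : ∀ y z : G, ∀ a b : ℝ, 0 ≤ a → 0 ≤ b → a + b = 1 →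
      g (a • y + b • z) ≤ (a : EReal) * g y + (b : EReal) * g z)
    (hg_lsc : LowerSemicontinuous g)
    (L : H →L[ℝ] G) (V : Submodule ℝ H) [V.HasOrthogonalProjection]
    (γ : ℝ) (hγ0 : 0 < γ) (hγβ : γ ≤ β)
    (xn : H) (hxn : xn ∈ V)
    (vplus : G) (hvplus : fconj g vplus ≠ ⊤)
    (xplus : H) (hxplus : xplus = projV V (xn - γ • (L.adjoint vplus + h' xn))) :
    ∀ x : H, x ∈ V →
      ((γ : ℝ) : EReal) * (saddleK h g L V xplus vplus - saddleK h g L V x vplus)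
        ≤ ((1 / 2 * (‖xn - x‖ ^ 2 - ‖xplus - x‖ ^ 2)
            - γ / 2 * (1 / γ - 1 / β) * ‖xplus - xn‖ ^ 2 : ℝ) : EReal) := by
  intro x hx
  -- xplus is in V
  have hxpV : xplus ∈ V := by
    rw [hxplus]
    exact (V.orthogonalProjectionOnto _).2
  -- fconj g vplus is a real number
  have hbot : fconj g vplus ≠ ⊥ := by
    obtain ⟨y₀, hy₀⟩ := hg_proper
    have hgy : g y₀ = ((g y₀).toReal : EReal) := (EReal.coe_toReal hy₀ (hg_ne_bot y₀)).symm
    have h1 : ((⟪vplus, y₀⟫ : ℝ) : EReal) - g y₀ ≤ fconj g vplus :=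
      le_iSup (fun y => ((⟪vplus, y⟫ : ℝ) : EReal) - g y) y₀
    rw [hgy, ← EReal.coe_sub] at h1
    exact ((EReal.bot_lt_coe _).trans_le h1).ne'
  set c : ℝ := (fconj g vplus).toReal with hcdef
  have hc : fconj g vplus = (c : EReal) := (EReal.coe_toReal hvplus hbot).symm
  -- rewrite saddleK values as real numbers
  have hK : ∀ z : H, z ∈ V →
      saddleK h g L V z vplus = ((h z + ⟪L z, vplus⟫ - c : ℝ) : EReal) := by
    intro z hz
    simp only [saddleK, if_pos hz, add_zero, hc, ← EReal.coe_add, ← EReal.coe_sub]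
  rw [hK xplus hxpV, hK x hx, ← EReal.coe_sub, ← EReal.coe_mul, EReal.coe_le_coe_iff]
  -- the key variational inequality from the projection
  set u : H := L.adjoint vplus + h' xn with hu
  have hproj : ⟪xn - γ • u - xplus, xplus - x⟫ = 0 := by
    have hmem : xplus - x ∈ V := V.sub_mem hxpV hx
    have := V.starProjection_inner_eq_zero (xn - γ • u) (xplus - x) hmem
    rw [Submodule.starProjection_apply] at this
    have hxp : (V.orthogonalProjectionOnto (xn - γ • u) : H) = xplus := by
      rw [hxplus]; simp [projV]
    rwa [hxp] at this
  have f4 : γ * ⟪u, xplus - x⟫ = ⟪xn - xplus, xplus - x⟫ := by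
    have heq : xn - γ • u - xplus = (xn - xplus) - γ • u := by abel
    rw [heq, inner_sub_left, real_inner_smul_left] at hproj
    linarith
  -- descent and convexity inequalities
  have f1 := descent_lemma hβ hgrad hlip xn xplus
  have f2 := convex_grad_ineq hconv hgrad xn x
  -- adjoint identity
  have f3 : ⟪L xplus, vplus⟫ - ⟪L x, vplus⟫ = ⟪L.adjoint vplus, xplus - x⟫ := by
    rw [ContinuousLinearMap.adjoint_inner_left, map_sub, inner_sub_right,
      real_inner_comm vplus (L xplus), real_inner_comm vplus (L x)]
  -- norm identity
  have f5 : ‖xn - x‖ ^ 2 = ‖xn - xplus‖ ^ 2 + 2 * ⟪xn - xplus, xplus - x⟫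
      + ‖xplus - x‖ ^ 2 := by
    have : xn - x = (xn - xplus) + (xplus - x) := by abel
    rw [this, norm_add_sq_real]
  -- split inner products
  have f6 : ⟪u, xplus - x⟫ = ⟪L.adjoint vplus, xplus - x⟫ + ⟪h' xn, xplus - x⟫ := by
    rw [hu, inner_add_left]
  have f7 : ⟪h' xn, xplus - xn⟫ - ⟪h' xn, x - xn⟫ = ⟪h' xn, xplus - x⟫ := by
    rw [← inner_sub_right]
    congr 1
    abel
  have hnn : ‖xplus - xn‖ = ‖xn - xplus‖ := norm_sub_rev _ _
  -- put it all together
  have hβinv : β⁻¹ = 1 / β := by rw [one_div]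
  have hγγ : γ * (1 / γ) = 1 := mul_one_div_cancel hγ0.ne'
  have hββ : β * (1 / β) = 1 := mul_one_div_cancel hβ.ne'
  have step : γ * ((h xplus + ⟪L xplus, vplus⟫ - c) - (h x + ⟪L x, vplus⟫ - c))
      ≤ ⟪xn - xplus, xplus - x⟫ + γ * (1 / β) / 2 * ‖xn - xplus‖ ^ 2 := by
    have hsum : (h xplus + ⟪L xplus, vplus⟫ - c) - (h x + ⟪L x, vplus⟫ - c)
        ≤ ⟪u, xplus - x⟫ + (1 / β) / 2 * ‖xn - xplus‖ ^ 2 := by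
      rw [hβinv] at f1
      rw [hnn] at f1
      nlinarith [f1, f2, f3, f6, f7]
    have := mul_le_mul_of_nonneg_left hsum hγ0.le
    calc γ * ((h xplus + ⟪L xplus, vplus⟫ - c) - (h x + ⟪L x, vplus⟫ - c))
        ≤ γ * (⟪u, xplus - x⟫ + (1 / β) / 2 * ‖xn - xplus‖ ^ 2) := this
      _ = γ * ⟪u, xplus - x⟫ + γ * (1 / β) / 2 * ‖xn - xplus‖ ^ 2 := by ring
      _ = ⟪xn - xplus, xplus - x⟫ + γ * (1 / β) / 2 * ‖xn - xplus‖ ^ 2 := by rw [f4]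
  have hrhs : 1 / 2 * (‖xn - x‖ ^ 2 - ‖xplus - x‖ ^ 2)
      - γ / 2 * (1 / γ - 1 / β) * ‖xplus - xn‖ ^ 2
      = ⟪xn - xplus, xplus - x⟫ + γ * (1 / β) / 2 * ‖xn - xplus‖ ^ 2 := by
    rw [hnn]
    linear_combination (1/2 : ℝ) * f5 - ‖xn - xplus‖ ^ 2 / 2 * hγγ
  linarith [step, hrhs.ge]
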